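/- For a > 0, b ∈ ℝ with a ≠ b, and ℓ > 0, the quantity F(a,b,ℓ) = (bΓ(a,b,ℓ) − 2a𝒢(a,b,ℓ))/(b−a) equals 2ℓ√a · exp(−ℓ²b²/(8a)) · [h(ℓ(b−2a)/(2√a)) − h(−ℓb/(2√a))]/(b−a), and this quantity is strictly positive. -/

import Mathlib

open Real MeasureTheory Filter

noncomputable def Phi (x : ℝ) : ℝ :=
  (Real.sqrt (2 * Real.pi))⁻¹ * ∫ y in Set.Iic x, Real.exp (-y ^ 2 / 2)

lemma integrable_gauss : Integrable (fun y : ℝ => Real.exp (-y ^ 2 / 2)) := by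
  have h := integrable_exp_neg_mul_sq (b := (1:ℝ)/2) (by norm_num)
  convert h using 2 with y
  ring_nf

lemma cont_gauss : Continuous (fun y : ℝ => Real.exp (-y ^ 2 / 2)) := by
  continuity

lemma Iic_integral_eq (x : ℝ) :
    (∫ y in Set.Iic x, Real.exp (-y ^ 2 / 2)) =
      (∫ y in Set.Iic (0:ℝ), Real.exp (-y ^ 2 / 2)) + ∫ y in (0:ℝ)..x, Real.exp (-y ^ 2 / 2) := by
  have := intervalIntegral.integral_Iic_sub_Iic (μ := volume)
    (f := fun y : ℝ => Real.exp (-y ^ 2 / 2))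
    (integrable_gauss.integrableOn) (integrable_gauss.integrableOn) (a := 0) (b := x)
  linarith [this]

lemma hasDerivAt_Phi (x : ℝ) :
    HasDerivAt Phi ((Real.sqrt (2 * Real.pi))⁻¹ * Real.exp (-x ^ 2 / 2)) x := by
  have hd : HasDerivAt (fun u => ∫ y in (0:ℝ)..u, Real.exp (-y ^ 2 / 2))
      (Real.exp (-x ^ 2 / 2)) x :=
    intervalIntegral.integral_hasDerivAt_right (integrable_gauss.intervalIntegrable)
      (cont_gauss.aestronglyMeasurable.stronglyMeasurableAtFilter) cont_gauss.continuousAt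
  have : HasDerivAt (fun u => (Real.sqrt (2 * Real.pi))⁻¹ *
      ((∫ y in Set.Iic (0:ℝ), Real.exp (-y ^ 2 / 2)) + ∫ y in (0:ℝ)..u, Real.exp (-y ^ 2 / 2)))
      ((Real.sqrt (2 * Real.pi))⁻¹ * Real.exp (-x ^ 2 / 2)) x :=
    by simpa using ((hasDerivAt_const x _).add hd).const_mul ((Real.sqrt (2 * Real.pi))⁻¹)
  refine this.congr_of_eventuallyEq ?_
  filter_upwards with u
  rw [Phi, Iic_integral_eq]

/-- auxiliary function for the Mills-ratio bound -/
noncomputable def Gfun (x : ℝ) : ℝ :=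
  Real.sqrt (2 * Real.pi) * Phi x + x * Real.exp (-x ^ 2 / 2) / (1 + x ^ 2)

lemma sqrt_two_pi_pos : 0 < Real.sqrt (2 * Real.pi) :=
  Real.sqrt_pos.2 (by positivity)

lemma hasDerivAt_Gfun (x : ℝ) :
    HasDerivAt Gfun (2 * Real.exp (-x ^ 2 / 2) / (1 + x ^ 2) ^ 2) x := by
  have h1 : HasDerivAt (fun x : ℝ => Real.sqrt (2 * Real.pi) * Phi x)
      (Real.exp (-x ^ 2 / 2)) x := by
    have := (hasDerivAt_Phi x).const_mul (Real.sqrt (2 * Real.pi))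
    have hne : Real.sqrt (2 * Real.pi) ≠ 0 := ne_of_gt sqrt_two_pi_pos
    refine this.congr_deriv ?_
    field_simp
  have hx2 : HasDerivAt (fun x : ℝ => -x ^ 2 / 2) (-x) x := by
    have : HasDerivAt (fun x : ℝ => x ^ 2) (2 * x) x := by
      simpa using (hasDerivAt_pow 2 x)
    exact (this.neg.div_const 2).congr_deriv (by ring)
  have hexp : HasDerivAt (fun x : ℝ => Real.exp (-x ^ 2 / 2))
      (Real.exp (-x ^ 2 / 2) * (-x)) x := (hx2.exp)
  have hnum : HasDerivAt (fun x : ℝ => x * Real.exp (-x ^ 2 / 2))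
      (Real.exp (-x ^ 2 / 2) + x * (Real.exp (-x ^ 2 / 2) * (-x))) x := by
    exact ((hasDerivAt_id x).mul hexp).congr_deriv (by simp)
  have hden : HasDerivAt (fun x : ℝ => 1 + x ^ 2) (2 * x) x := by
    exact ((hasDerivAt_const x (1:ℝ)).add (hasDerivAt_pow 2 x)).congr_deriv (by simp)
  have hdenne : (1 : ℝ) + x ^ 2 ≠ 0 := by positivity
  have h2 := hnum.div hden hdenne
  have := h1.add h2
  refine this.congr_deriv ?_
  field_simp
  ring

lemma tendsto_Gfun_atBot : Tendsto Gfun atBot (nhds 0) := by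
  have h1 : Tendsto (fun x : ℝ => Real.sqrt (2 * Real.pi) * Phi x) atBot (nhds 0) := by
    have key : ∀ x : ℝ, Real.sqrt (2 * Real.pi) * Phi x =
        (∫ y in Set.Iic (0:ℝ), Real.exp (-y ^ 2 / 2)) - ∫ y in x..(0:ℝ), Real.exp (-y ^ 2 / 2) := by
      intro x
      rw [Phi, ← mul_assoc, mul_inv_cancel₀ (ne_of_gt sqrt_two_pi_pos), one_mul,
        Iic_integral_eq, intervalIntegral.integral_symm]
      ring
    have ht : Tendsto (fun x : ℝ => ∫ y in x..(0:ℝ), Real.exp (-y ^ 2 / 2)) atBot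
        (nhds (∫ y in Set.Iic (0:ℝ), Real.exp (-y ^ 2 / 2))) :=
      MeasureTheory.intervalIntegral_tendsto_integral_Iic (0:ℝ)
        (integrable_gauss.integrableOn) tendsto_id
    have h := (tendsto_const_nhds (x := (∫ y in Set.Iic (0:ℝ), Real.exp (-y ^ 2 / 2)))
      (f := atBot)).sub ht
    rw [sub_self] at h
    exact h.congr fun x => (key x).symm
  have h2 : Tendsto (fun x : ℝ => x * Real.exp (-x ^ 2 / 2) / (1 + x ^ 2)) atBot (nhds 0) := by
    refine squeeze_zero_norm (a := fun x : ℝ => Real.exp (-x ^ 2 / 2)) (fun x => ?_) ?_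
    · show ‖x * Real.exp (-x ^ 2 / 2) / (1 + x ^ 2)‖ ≤ Real.exp (-x ^ 2 / 2)
      have hd : (0:ℝ) < 1 + x ^ 2 := by positivity
      rw [Real.norm_eq_abs, abs_div, abs_mul, abs_of_pos hd, abs_of_pos (Real.exp_pos _)]
      have hb : |x| ≤ 1 + x ^ 2 := by nlinarith [sq_nonneg (|x| - 1), sq_abs x]
      calc |x| * Real.exp (-x ^ 2 / 2) / (1 + x ^ 2)
          ≤ (1 + x ^ 2) * Real.exp (-x ^ 2 / 2) / (1 + x ^ 2) := by
            gcongr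
        _ = Real.exp (-x ^ 2 / 2) := by field_simp
    · have hsq : Tendsto (fun x : ℝ => x ^ 2) atBot atTop := by
        refine tendsto_atTop.mpr fun c => ?_
        filter_upwards [eventually_le_atBot (-(|c| + 1))] with x hx
        nlinarith [le_abs_self c, abs_nonneg c]
      have hneg : Tendsto (fun x : ℝ => -x ^ 2) atBot atBot :=
        tendsto_neg_atTop_atBot.comp hsq
      have hdiv : Tendsto (fun x : ℝ => -x ^ 2 / 2) atBot atBot :=
        hneg.atBot_div_const (by norm_num)
      exact Real.tendsto_exp_atBot.comp hdiv
  have h := h1.add h2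
  rw [add_zero] at h
  exact h

lemma Gfun_pos (x : ℝ) : 0 < Gfun x := by
  have hmono : StrictMono Gfun := by
    apply strictMono_of_deriv_pos
    intro y
    rw [(hasDerivAt_Gfun y).deriv]
    positivity
  have hnonneg : ∀ y : ℝ, 0 ≤ Gfun y := by
    intro y
    refine le_of_tendsto tendsto_Gfun_atBot ?_
    filter_upwards [eventually_le_atBot y] with z hz
    exact (hmono.le_iff_le).2 hz
  have := hmono (show x - 1 < x by linarith)
  linarith [hnonneg (x - 1)]

noncomputable def hfun (x : ℝ) : ℝ := x * Real.exp (x ^ 2 / 2) * Phi x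

lemma hasDerivAt_hfun (x : ℝ) :
    HasDerivAt hfun
      ((1 + x ^ 2) * Real.exp (x ^ 2 / 2) * Phi x + x * (Real.sqrt (2 * Real.pi))⁻¹) x := by
  have hx2 : HasDerivAt (fun x : ℝ => x ^ 2 / 2) x x := by
    have : HasDerivAt (fun x : ℝ => x ^ 2) (2 * x) x := by simpa using hasDerivAt_pow 2 x
    exact (this.div_const 2).congr_deriv (by ring)
  have hexp : HasDerivAt (fun x : ℝ => Real.exp (x ^ 2 / 2)) (Real.exp (x ^ 2 / 2) * x) x :=
    hx2.exp
  have h1 : HasDerivAt (fun x : ℝ => x * Real.exp (x ^ 2 / 2))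
      (Real.exp (x ^ 2 / 2) + x * (Real.exp (x ^ 2 / 2) * x)) x := by
    exact ((hasDerivAt_id x).mul hexp).congr_deriv (by simp)
  have h2 := h1.mul (hasDerivAt_Phi x)
  have hexpinv : Real.exp (x ^ 2 / 2) * Real.exp (-x ^ 2 / 2) = 1 := by
    rw [← Real.exp_add, (by ring : x ^ 2 / 2 + -x ^ 2 / 2 = 0), Real.exp_zero]
  refine h2.congr_deriv ?_
  have : x * Real.exp (x ^ 2 / 2) * ((Real.sqrt (2 * Real.pi))⁻¹ * Real.exp (-x ^ 2 / 2))
      = x * (Real.sqrt (2 * Real.pi))⁻¹ := by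
    calc x * Real.exp (x ^ 2 / 2) * ((Real.sqrt (2 * Real.pi))⁻¹ * Real.exp (-x ^ 2 / 2))
        = x * (Real.sqrt (2 * Real.pi))⁻¹ * (Real.exp (x ^ 2 / 2) * Real.exp (-x ^ 2 / 2)) := by
          ring
      _ = x * (Real.sqrt (2 * Real.pi))⁻¹ := by rw [hexpinv]; ring
  rw [this]; ring

lemma strictMono_hfun : StrictMono hfun := by
  apply strictMono_of_deriv_pos
  intro x
  rw [(hasDerivAt_hfun x).deriv]
  have hG := Gfun_pos x
  have key : (1 + x ^ 2) * Real.exp (x ^ 2 / 2) * Phi x + x * (Real.sqrt (2 * Real.pi))⁻¹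
      = Real.exp (x ^ 2 / 2) * (1 + x ^ 2) / Real.sqrt (2 * Real.pi) * Gfun x := by
    rw [Gfun]
    have h1 : (0:ℝ) < 1 + x ^ 2 := by positivity
    have hexpinv : Real.exp (x ^ 2 / 2) * Real.exp (-x ^ 2 / 2) = 1 := by
      rw [← Real.exp_add, (by ring : x ^ 2 / 2 + -x ^ 2 / 2 = 0), Real.exp_zero]
    have hexpinv2 : Real.exp (x ^ 2 / 2) * Real.exp (-(x ^ 2 / 2)) = 1 := by
      rw [← Real.exp_add, add_neg_cancel, Real.exp_zero]
    field_simp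
    linear_combination (-x) * hexpinv2
  rw [key]
  have : 0 < Real.exp (x ^ 2 / 2) * (1 + x ^ 2) / Real.sqrt (2 * Real.pi) := by
    have := sqrt_two_pi_pos; positivity
  exact mul_pos this hG

noncomputable def Gam (a b ℓ : ℝ) : ℝ :=
  ℓ ^ 2 * Phi (-(ℓ * b) / (2 * Real.sqrt a)) +
    ℓ ^ 2 * Real.exp (ℓ ^ 2 * (a - b) / 2) * Phi (ℓ * (b / (2 * Real.sqrt a) - Real.sqrt a))

noncomputable def calG (a b ℓ : ℝ) : ℝ :=
  ℓ ^ 2 * Real.exp (ℓ ^ 2 * (a - b) / 2) * Phi (ℓ * (b / (2 * Real.sqrt a) - Real.sqrt a))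

/-- For `a > 0`, `b ≠ a`, `ℓ > 0`,
`F(a,b,ℓ) = (bΓ − 2a𝒢)/(b−a) = 2ℓ√a e^{−ℓ²b²/(8a)} (h(ℓ(b−2a)/(2√a)) − h(−ℓb/(2√a)))/(b−a) > 0`. -/
theorem F_formula_and_pos (a b ℓ : ℝ) (ha : 0 < a) (hab : a ≠ b) (hℓ : 0 < ℓ) :
    (b * Gam a b ℓ - 2 * a * calG a b ℓ) / (b - a) =
      2 * ℓ * Real.sqrt a * Real.exp (-(ℓ ^ 2 * b ^ 2) / (8 * a)) *
        ((hfun (ℓ * (b - 2 * a) / (2 * Real.sqrt a)) - hfun (-(ℓ * b) / (2 * Real.sqrt a))) /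
          (b - a)) ∧
    0 < (b * Gam a b ℓ - 2 * a * calG a b ℓ) / (b - a) := by
  set s := Real.sqrt a with hsdef
  have hs0 : 0 < s := Real.sqrt_pos.2 ha
  have hs2 : s ^ 2 = a := Real.sq_sqrt ha.le
  set u : ℝ := -(ℓ * b) / (2 * s) with hu
  set v : ℝ := ℓ * (b / (2 * s) - s) with hv
  set w : ℝ := ℓ * (b - 2 * a) / (2 * s) with hw
  have hwv : w = v := by
    have h2s : (2 * s) ≠ 0 := by positivity
    refine mul_left_cancel₀ h2s ?_
    rw [hw, hv, ← hs2]
    field_simp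
  -- exponential bookkeeping
  set X : ℝ := Real.exp (-(ℓ ^ 2 * b ^ 2) / (8 * a)) with hX
  set E : ℝ := Real.exp (ℓ ^ 2 * (a - b) / 2) with hE
  have e2 : X * Real.exp (u ^ 2 / 2) = 1 := by
    rw [hX, hu, ← Real.exp_add, ← Real.exp_zero]
    congr 1
    rw [← hs2]
    field_simp
    ring
  have e1 : X * Real.exp (v ^ 2 / 2) = E := by
    rw [hX, hv, hE, ← Real.exp_add]
    congr 1
    rw [← hs2]
    field_simp
    ring
  have hu2 : 2 * ℓ * s * u = -(ℓ ^ 2 * b) := by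
    rw [hu]; field_simp
  have hv2 : 2 * ℓ * s * v = ℓ ^ 2 * (b - 2 * a) := by
    rw [hv, ← hs2]; field_simp
  -- the numerator identity
  have hnum : b * Gam a b ℓ - 2 * a * calG a b ℓ =
      2 * ℓ * s * X * (hfun w - hfun u) := by
    rw [Gam, calG, hwv, hfun, hfun]
    calc b * (ℓ ^ 2 * Phi u + ℓ ^ 2 * E * Phi v) - 2 * a * (ℓ ^ 2 * E * Phi v)
        = (2 * ℓ * s * v) * (X * Real.exp (v ^ 2 / 2)) * Phi v
            - (2 * ℓ * s * u) * (X * Real.exp (u ^ 2 / 2)) * Phi u := by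
          rw [hu2, hv2, e1, e2]; ring
      _ = 2 * ℓ * s * X * (v * Real.exp (v ^ 2 / 2) * Phi v
            - u * Real.exp (u ^ 2 / 2) * Phi u) := by ring
  have hquot : 0 < (hfun w - hfun u) / (b - a) := by
    rcases lt_or_gt_of_ne hab with hba | hba
    · -- a < b
      have huw : u < w := by
        rw [hu, hw]
        apply div_lt_div_of_pos_right _ (by positivity)
        nlinarith
      exact div_pos (sub_pos.2 (strictMono_hfun huw)) (by linarith)
    · -- b < a
      have hwu : w < u := by
        rw [hu, hw]
        apply div_lt_div_of_pos_right _ (by positivity)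
        nlinarith
      exact div_pos_of_neg_of_neg (sub_neg.2 (strictMono_hfun hwu)) (by linarith)
  constructor
  · rw [hnum, mul_div_assoc]
  · rw [hnum, mul_div_assoc]
    have hX0 : 0 < X := Real.exp_pos _
    positivity
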